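/- For b ∈ F_{q^ℓ}^× let W_b = {(x, b x^q) : x ∈ F_{q^ℓ}} and for c ∈ F_{q^ℓ} let H_c = {(x, cx) : x ∈ F_{q^ℓ}}, both viewed as F_q-subspaces of F_{q^ℓ}^2. Then W_b ∩ H_c ≠ {0} if and only if c ∈ b·Σ, where Σ is the kernel of the norm map F_{q^ℓ}^× → F_q^×; and whenever this holds, dim_{F_q}(W_b ∩ H_c) = 1. -/

import Mathlib

open Finset Polynomial
open scoped Classical

section aux

variable (F K : Type*) [Field F] [Field K] [Fintype F] [Fintype K] [Algebra F K]

lemma aux_roots (d : ℕ) (hd : 2 ≤ d) :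
    (Finset.univ.filter (fun x : K => x ^ d = x)).card ≤ d := by
  classical
  set P : Polynomial K := X ^ d - X with hP
  have hdeg : P.natDegree = d := by
    rw [hP, natDegree_sub_eq_left_of_natDegree_lt]
    · exact natDegree_X_pow d
    · rw [natDegree_X, natDegree_X_pow]; omega
  have hP0 : P ≠ 0 := fun h => by simp [h] at hdeg; omega
  have hsub : (Finset.univ.filter (fun x : K => x ^ d = x)) ⊆ P.roots.toFinset := by
    intro x hx
    rw [Multiset.mem_toFinset, mem_roots hP0]
    simp only [mem_filter] at hx
    simp [P, IsRoot.def, hx.2]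
  calc (Finset.univ.filter (fun x : K => x ^ d = x)).card
      ≤ P.roots.toFinset.card := Finset.card_le_card hsub
    _ ≤ Multiset.card P.roots := Multiset.toFinset_card_le _
    _ ≤ P.natDegree := P.card_roots' 
    _ = d := hdeg

lemma aux_fixed {t : K} (ht : t ^ Fintype.card F = t) :
    ∃ s : F, algebraMap F K s = t := by
  classical
  have hq : 2 ≤ Fintype.card F := Fintype.one_lt_card
  set S : Finset K := Finset.univ.image (algebraMap F K) with hS
  have hcard : S.card = Fintype.card F := by
    rw [hS, Finset.card_image_of_injective _ (algebraMap F K).injective, Finset.card_univ]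
  have hsub : S ⊆ Finset.univ.filter (fun x : K => x ^ Fintype.card F = x) := by
    intro x hx
    rw [hS, Finset.mem_image] at hx
    obtain ⟨s, -, rfl⟩ := hx
    simp [← map_pow, FiniteField.pow_card]
  have hEq : S = Finset.univ.filter (fun x : K => x ^ Fintype.card F = x) :=
    Finset.eq_of_subset_of_card_le hsub (by rw [hcard]; exact aux_roots K _ hq)
  have htm : t ∈ S := by
    rw [hEq, Finset.mem_filter]; exact ⟨Finset.mem_univ _, ht⟩
  rw [hS, Finset.mem_image] at htm
  obtain ⟨s, -, hs⟩ := htm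
  exact ⟨s, hs⟩

lemma aux_frob : ∃ φ : K ≃ₐ[F] K, ∀ x : K, φ x = x ^ Fintype.card F := by
  obtain ⟨p, hp⟩ := CharP.exists F
  haveI := hp
  have hprime : p.Prime := CharP.char_is_prime F p
  haveI : Fact p.Prime := ⟨hprime⟩
  haveI : CharP K p := charP_of_injective_algebraMap (algebraMap F K).injective p
  obtain ⟨k, -, hcard⟩ := FiniteField.card F p
  let f0 : K →+* K := iterateFrobenius K p k
  have hf0 : ∀ x : K, f0 x = x ^ Fintype.card F := fun x => by
    show x ^ p ^ (k:ℕ) = x ^ Fintype.card F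
    rw [hcard]
  let f : K →ₐ[F] K :=
    { f0 with commutes' := fun s => by simp only [RingHom.toMonoidHom_eq_coe,
        OneHom.toFun_eq_coe, MonoidHom.toOneHom_coe, MonoidHom.coe_coe, hf0,
        ← map_pow, FiniteField.pow_card] }
  have hinj : Function.Injective f := f0.injective
  exact ⟨AlgEquiv.ofBijective f ⟨hinj, Finite.surjective_of_injective hinj⟩, hf0⟩

end aux

section aux2

variable {F K : Type*} [Field F] [Field K] [Fintype F] [Fintype K] [Algebra F K]

lemma aux_norm {q ℓ : ℕ} (hF : Fintype.card F = q) (hK : Fintype.card K = q ^ ℓ) (u : K) :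
    algebraMap F K (Algebra.norm F u) = u ^ (∑ i ∈ Finset.range ℓ, q ^ i) := by
  have hq : 2 ≤ q := hF ▸ Fintype.one_lt_card
  haveI : FiniteDimensional F K := inferInstance
  have hrank : ℓ = Module.finrank F K := by
    have h1 : Fintype.card K = q ^ Module.finrank F K := by
      rw [Module.card_eq_pow_finrank (K := F) (V := K), hF]
    exact Nat.pow_right_injective hq (hK.symm.trans h1)
  obtain ⟨φ, hφ⟩ := aux_frob F K
  have hφpow : ∀ (i : ℕ) (x : K), (φ ^ i) x = x ^ q ^ i := by
    intro i
    induction i with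
    | zero => intro x; simp
    | succ i ih =>
      intro x
      rw [pow_succ, AlgEquiv.mul_apply, hφ, hF, ih, ← pow_mul, pow_succ, mul_comm (q ^ i) q,
        pow_mul]
  obtain ⟨g, hg⟩ := IsCyclic.exists_generator (α := Kˣ)
  have hog : orderOf g = q ^ ℓ - 1 := by
    rw [orderOf_eq_card_of_forall_mem_zpowers hg, Nat.card_eq_fintype_card, Fintype.card_units, hK]
  have key : ∀ i j : ℕ, i < j → j < ℓ → φ ^ i ≠ φ ^ j := by
    intro i j hij hj hEq
    have h1 : (g : K) ^ q ^ i = (g : K) ^ q ^ j := by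
      have := congrArg (fun σ : K ≃ₐ[F] K => σ (g : K)) hEq
      simpa [hφpow] using this
    have h2 : g ^ q ^ i = g ^ q ^ j := Units.ext (by push_cast [h1]; rfl)
    have h3 : q ^ i ≡ q ^ j [MOD q ^ ℓ - 1] := hog ▸ pow_eq_pow_iff_modEq.mp h2
    have b1 : q ^ i < q ^ j := Nat.pow_lt_pow_right (by omega) hij
    have b2 : q ^ j < q ^ ℓ := Nat.pow_lt_pow_right (by omega) hj
    have hd : (q ^ ℓ - 1) ∣ q ^ j - q ^ i := (Nat.modEq_iff_dvd' b1.le).mp h3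
    have h4 := Nat.le_of_dvd (by omega) hd
    have h5 : 1 ≤ q ^ i := Nat.one_le_pow _ _ (by omega)
    omega
  have hinj : Function.Injective (fun i : Fin ℓ => φ ^ (i : ℕ)) := by
    intro i j h
    by_contra hne
    have hne' : (i : ℕ) ≠ (j : ℕ) := fun hv => hne (Fin.ext hv)
    rcases hne'.lt_or_gt with h' | h'
    · exact key _ _ h' j.isLt h
    · exact key _ _ h' i.isLt h.symm
  have hbij : Function.Bijective (fun i : Fin ℓ => φ ^ (i : ℕ)) :=
    (Fintype.bijective_iff_injective_and_card _).mpr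
      ⟨hinj, by rw [Fintype.card_fin, ← Nat.card_eq_fintype_card, IsGalois.card_aut_eq_finrank, hrank]⟩
  rw [Algebra.norm_eq_prod_automorphisms,
    ← Fintype.prod_bijective _ hbij (fun i => u ^ q ^ (i : ℕ)) (fun σ => σ u)
      (fun i => (hφpow _ _).symm),
    ← Finset.prod_range (fun i => u ^ q ^ i), Finset.prod_pow_eq_pow_sum]

lemma aux_exists_root {q ℓ : ℕ} (hF : Fintype.card F = q) (hK : Fintype.card K = q ^ ℓ)
    (hl : 1 ≤ ℓ) {u : K} (hu : u ≠ 0) (hnorm : Algebra.norm F u = 1) :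
    ∃ x : K, x ≠ 0 ∧ x ^ (q - 1) = u := by
  have hq : 2 ≤ q := hF ▸ Fintype.one_lt_card
  set e := ∑ i ∈ Finset.range ℓ, q ^ i with he
  have hue : u ^ e = 1 := by
    have := aux_norm hF hK u
    rw [hnorm, map_one] at this
    exact this.symm
  have hql : 1 ≤ q ^ ℓ := Nat.one_le_pow _ _ (by omega)
  have hz : ((e : ℤ)) * ((q : ℤ) - 1) = (q : ℤ) ^ ℓ - 1 := by
    push_cast [he]
    exact geom_sum_mul _ _
  have hid : q ^ ℓ - 1 = e * (q - 1) := by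
    have hgoal : ((q ^ ℓ - 1 : ℕ) : ℤ) = ((e * (q - 1) : ℕ) : ℤ) := by
      rw [Nat.cast_sub hql, Nat.cast_mul, Nat.cast_sub (by omega : 1 ≤ q)]
      push_cast
      linarith [hz]
    exact Nat.cast_injective hgoal
  have he0 : e ≠ 0 := by
    intro h0
    rw [h0, zero_mul] at hid
    have : 2 ≤ q ^ ℓ := by
      calc 2 ≤ q := hq
      _ = q ^ 1 := (pow_one q).symm
      _ ≤ q ^ ℓ := Nat.pow_le_pow_right (by omega) hl
    omega
  set v : Kˣ := Units.mk0 u hu with hv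
  obtain ⟨g, hg⟩ := IsCyclic.exists_generator (α := Kˣ)
  have hog : orderOf g = q ^ ℓ - 1 := by
    rw [orderOf_eq_card_of_forall_mem_zpowers hg, Nat.card_eq_fintype_card, Fintype.card_units, hK]
  obtain ⟨a, ha⟩ : ∃ a : ℕ, g ^ a = v := by
    have := hg v
    rw [← mem_powers_iff_mem_zpowers] at this
    exact (Submonoid.mem_powers_iff _ _).mp this
  have hve : v ^ e = 1 := Units.ext (by push_cast [hv, hue]; simp [hue])
  have hga : g ^ (a * e) = 1 := by rw [pow_mul, ha, hve]
  have hdvd : e * (q - 1) ∣ a * e := by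
    rw [← hid, ← hog]
    exact orderOf_dvd_of_pow_eq_one hga
  have hdvd' : (q - 1) ∣ a := by
    have : e * (q - 1) ∣ e * a := by rwa [mul_comm a e] at hdvd
    exact (mul_dvd_mul_iff_left he0).mp this
  obtain ⟨k, hk⟩ := hdvd'
  refine ⟨((g ^ k : Kˣ) : K), Units.ne_zero _, ?_⟩
  have : (g ^ k) ^ (q - 1) = v := by
    rw [← pow_mul, mul_comm k (q - 1), ← hk, ha]
  calc ((g ^ k : Kˣ) : K) ^ (q - 1) = (((g ^ k) ^ (q - 1) : Kˣ) : K) := by push_cast; rfl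
    _ = u := by rw [this, hv]; rfl

end aux2



/-- For `b ∈ F_{q^ℓ}ˣ`, `W_b = {(x, b x^q)}` and `H_c = {(x, cx)}` (as `F_q`-subspaces
of `F_{q^ℓ}²`) satisfy: `W_b ∩ H_c ≠ {0}` iff `c ∈ b·Σ` where `Σ = ker(N)`, and in
that case `dim_{F_q}(W_b ∩ H_c) = 1`. -/
theorem stmt_6 (q ℓ : ℕ) (F K : Type*) [Field F] [Field K] [Fintype F] [Fintype K]
    [Algebra F K] (hF : Fintype.card F = q) (hK : Fintype.card K = q ^ ℓ)
    (b c : K) (hb : b ≠ 0)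
    (Wb Hc : Submodule F (K × K))
    (hWb : (Wb : Set (K × K)) = {p : K × K | p.2 = b * p.1 ^ q})
    (hHc : (Hc : Set (K × K)) = {p : K × K | p.2 = c * p.1}) :
    (Wb ⊓ Hc ≠ ⊥ ↔ ∃ u : K, (u ≠ 0 ∧ Algebra.norm F u = 1) ∧ c = b * u) ∧
      (Wb ⊓ Hc ≠ ⊥ → Module.finrank F ↥(Wb ⊓ Hc) = 1) := by
  have hq : 2 ≤ q := hF ▸ Fintype.one_lt_card
  have hl : 1 ≤ ℓ := by
    by_contra h
    have : ℓ = 0 := by omega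
    rw [this, pow_zero] at hK
    exact absurd hK (by have := Fintype.one_lt_card (α := K); omega)
  have hmem : ∀ p : K × K, p ∈ Wb ⊓ Hc ↔ (p.2 = b * p.1 ^ q ∧ p.2 = c * p.1) := by
    intro p
    rw [Submodule.mem_inf, ← SetLike.mem_coe, hWb, show (p ∈ Hc ↔ p ∈ (Hc : Set (K × K))) from Iff.rfl, hHc]
    rfl
  have hpowsplit : ∀ x : K, x ^ q = x ^ (q - 1) * x := by
    intro x
    rw [← pow_succ, Nat.sub_add_cancel (by omega)]
  -- forward direction of the iff
  have hfwd : Wb ⊓ Hc ≠ ⊥ → ∃ u : K, (u ≠ 0 ∧ Algebra.norm F u = 1) ∧ c = b * u := by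
    intro hne
    obtain ⟨p, hp, hp0⟩ := Submodule.exists_mem_ne_zero_of_ne_bot hne
    obtain ⟨h1, h2⟩ := (hmem p).1 hp
    have hx : p.1 ≠ 0 := by
      intro h0
      exact hp0 (Prod.ext_iff.mpr ⟨h0, by rw [h2, h0, mul_zero]; rfl⟩)
    refine ⟨p.1 ^ (q - 1), ⟨pow_ne_zero _ hx, ?_⟩, ?_⟩
    · have hN : Algebra.norm F p.1 ≠ 0 := by
        have : Algebra.norm F p.1 * Algebra.norm F p.1⁻¹ = 1 := by
          rw [← map_mul, mul_inv_cancel₀ hx, map_one]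
        exact left_ne_zero_of_mul_eq_one this
      rw [map_pow, ← hF]
      exact FiniteField.pow_card_sub_one_eq_one _ hN
    · have : c * p.1 = b * p.1 ^ (q - 1) * p.1 := by
        rw [← h2, h1, hpowsplit, mul_assoc]
      exact (mul_right_cancel₀ hx this)
  refine ⟨⟨hfwd, ?_⟩, ?_⟩
  · rintro ⟨u, ⟨hu0, hu1⟩, rfl⟩
    obtain ⟨x, hx0, hxu⟩ := aux_exists_root hF hK hl hu0 hu1
    refine (Submodule.ne_bot_iff _).mpr ⟨(x, b * u * x), (hmem _).2 ⟨?_, rfl⟩, ?_⟩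
    · show b * u * x = b * x ^ q
      rw [hpowsplit, hxu]
      ring
    · intro h
      exact hx0 (congrArg Prod.fst h)
  · intro hne
    obtain ⟨p0, hp0mem, hp00⟩ := Submodule.exists_mem_ne_zero_of_ne_bot hne
    obtain ⟨h1, h2⟩ := (hmem p0).1 hp0mem
    have hx0 : p0.1 ≠ 0 := by
      intro h0
      exact hp00 (Prod.ext_iff.mpr ⟨h0, by rw [h2, h0, mul_zero]; rfl⟩)
    have hspan : Wb ⊓ Hc = Submodule.span F {p0} := by
      apply le_antisymm
      · intro p hp
        obtain ⟨g1, g2⟩ := (hmem p).1 hp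
        rcases eq_or_ne p.1 0 with h | h
        · have : p = 0 := Prod.ext_iff.mpr ⟨h, by rw [g2, h, mul_zero]; rfl⟩
          rw [this]
          exact Submodule.zero_mem _
        · have e1 : b * p.1 ^ (q - 1) * p.1 = c * p.1 := by
            rw [← g2, g1, hpowsplit, mul_assoc]
          have e2 : b * p0.1 ^ (q - 1) * p0.1 = c * p0.1 := by
            rw [← h2, h1, hpowsplit, mul_assoc]
          have e3 : p.1 ^ (q - 1) = p0.1 ^ (q - 1) :=
            mul_left_cancel₀ hb
              ((mul_right_cancel₀ h e1).trans (mul_right_cancel₀ hx0 e2).symm)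
          set t := p.1 * p0.1⁻¹ with htdef
          have htq1 : t ^ (q - 1) = 1 := by
            rw [htdef, mul_pow, e3, inv_pow, mul_inv_cancel₀ (pow_ne_zero _ hx0)]
          have ht : t ^ Fintype.card F = t := by
            rw [hF, hpowsplit, htq1, one_mul]
          obtain ⟨s, hs⟩ := aux_fixed F K ht
          have hsmul : ∀ z : K, s • z = t * z := fun z => by rw [Algebra.smul_def, hs]
          have hpt : p.1 = t * p0.1 := by
            rw [htdef, mul_assoc, inv_mul_cancel₀ hx0, mul_one]
          refine Submodule.mem_span_singleton.mpr ⟨s, ?_⟩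
          apply Prod.ext_iff.mpr
          constructor
          · show s • p0.1 = p.1
            rw [hsmul, ← hpt]
          · show s • p0.2 = p.2
            rw [hsmul, h2, g2, hpt]
            ring
      · rw [Submodule.span_le, Set.singleton_subset_iff]
        exact hp0mem
    rw [hspan]
    exact finrank_span_singleton hp00
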